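/- (Khinchine's inequality) For every 0 < p < ∞ there exists a constant C_p > 0 such that for all n ∈ ℕ and all complex scalars λ₁,…,λₙ, C_p⁻¹·(∑_{k=1}^n |λ_k|²)^{p/2} ≤ ∫₀¹ |∑_{k=1}^n λ_k R_k(t)|^p dt ≤ C_p·(∑_{k=1}^n |λ_k|²)^{p/2}, where R_k are the Rademacher functions. -/

import Mathlib

open Complex

/-- The Rademacher functions: `R₀(t) = 1` if `0 ≤ t - ⌊t⌋ < 1/2`, `-1` otherwise,
and `R_n(t) = R₀(2^n t)`. -/
noncomputable def Rademacher (n : ℕ) (t : ℝ) : ℝ :=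
  if Int.fract ((2:ℝ) ^ n * t) < 1/2 then 1 else -1

namespace Khinchine
open Finset MeasureTheory intervalIntegral

open Finset

def sgn (b : Bool) : ℝ := if b then -1 else 1

lemma sgn_sq (b : Bool) : sgn b ^ 2 = 1 := by cases b <;> simp [sgn]

lemma sum_sgn_mul {n : ℕ} (k l : Fin n) (hkl : k ≠ l) :
    ∑ ε : Fin n → Bool, sgn (ε k) * sgn (ε l) = 0 := by
  have hinv : Function.Involutive
      (fun ε : Fin n → Bool => Function.update ε k (!(ε k))) := by
    intro ε
    funext i
    rcases eq_or_ne i k with rfl | hi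
    · simp
    · simp [Function.update_of_ne hi]
  have hneg : ∀ ε : Fin n → Bool,
      (fun ε : Fin n → Bool => -(sgn (ε k) * sgn (ε l))) ε
        = (fun ε : Fin n → Bool => sgn (ε k) * sgn (ε l))
            ((fun ε : Fin n → Bool => Function.update ε k (!(ε k))) ε) := by
    intro ε
    simp only [Function.update_self, Function.update_of_ne (Ne.symm hkl)]
    cases h : ε k <;> cases hl : ε l <;> simp [sgn, h, hl]
  have := Fintype.sum_bijective _ hinv.bijective
      (fun ε : Fin n → Bool => -(sgn (ε k) * sgn (ε l)))
      (fun ε : Fin n → Bool => sgn (ε k) * sgn (ε l)) hneg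
  rw [Finset.sum_neg_distrib] at this
  linarith [this]

lemma sum_sgn_mul' {n : ℕ} (k l : Fin n) :
    ∑ ε : Fin n → Bool, sgn (ε k) * sgn (ε l)
      = if k = l then (2:ℝ)^n else 0 := by
  rcases eq_or_ne k l with rfl | h
  · simp only [if_pos rfl]
    have : ∀ ε : Fin n → Bool, sgn (ε k) * sgn (ε k) = 1 := by
      intro ε; have := sgn_sq (ε k); nlinarith [sgn_sq (ε k)]
    rw [Finset.sum_congr rfl (fun ε _ => this ε)]
    simp [Finset.card_univ, Fintype.card_fun]
  · rw [if_neg h]; exact sum_sgn_mul k l h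

lemma sum_sq {n : ℕ} (a : Fin n → ℝ) :
    ∑ ε : Fin n → Bool, (∑ k, a k * sgn (ε k))^2
      = 2^n * ∑ k, (a k)^2 := by
  have expand : ∀ ε : Fin n → Bool,
      (∑ k, a k * sgn (ε k))^2
        = ∑ k, ∑ l, (a k * a l) * (sgn (ε k) * sgn (ε l)) := by
    intro ε
    rw [sq, Finset.sum_mul_sum]
    refine Finset.sum_congr rfl fun k _ => Finset.sum_congr rfl fun l _ => by ring
  rw [Finset.sum_congr rfl (fun ε _ => expand ε), Finset.sum_comm]
  have : ∀ k : Fin n, ∑ ε : Fin n → Bool, ∑ l, (a k * a l) * (sgn (ε k) * sgn (ε l))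
      = 2^n * (a k)^2 := by
    intro k
    rw [Finset.sum_comm]
    have : ∀ l : Fin n, ∑ ε : Fin n → Bool, (a k * a l) * (sgn (ε k) * sgn (ε l))
        = if k = l then 2^n * (a k)^2 else 0 := by
      intro l
      rw [← Finset.mul_sum, sum_sgn_mul' k l]
      rcases eq_or_ne k l with rfl | h
      · simp [sq]; ring
      · simp [h]
    rw [Finset.sum_congr rfl (fun l _ => this l), Finset.sum_ite_eq]
    simp
  rw [Finset.sum_congr rfl (fun k _ => this k), ← Finset.mul_sum]



lemma sum_ite_even (m : ℕ) (f : ℕ → ℝ) :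
    ∑ i ∈ range (2*m+1), (if Even i then f i else 0)
      = ∑ j ∈ range (m+1), f (2*j) := by
  induction m with
  | zero => simp
  | succ m ih =>
    have h : 2*(m+1)+1 = (2*m+1) + 1 + 1 := by ring
    rw [h, sum_range_succ, sum_range_succ, ih, sum_range_succ]
    have h1 : ¬ Even (2*m+1) := by simp [Nat.even_add_one, Nat.even_mul]
    have h2 : Even (2*m+1+1) := by simp [Nat.even_add_one, h1]
    rw [if_neg h1, if_pos h2]
    rw [sum_range_succ, sum_range_succ]
    have e1 : 2*(m+1) = 2*m+1+1 := by ring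
    have e2 : 2*m+2 = 2*m+1+1 := by ring
    rw [e1, e2]; ring

lemma pow_even_add (y c : ℝ) (m : ℕ) :
    (y + c)^(2*m) + (y - c)^(2*m)
      = ∑ j ∈ range (m+1), 2 * (Nat.choose (2*m) (2*j) : ℝ) * y^(2*j) * c^(2*m-2*j) := by
  rw [add_pow, sub_eq_add_neg, add_pow, ← sum_add_distrib]
  rw [← sum_ite_even m (fun i => 2 * (Nat.choose (2*m) i : ℝ) * y^i * c^(2*m-i))]
  · refine sum_congr rfl fun i hi => ?_
    have hi' : i ≤ 2*m := by
      simp only [mem_range] at hi; omega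
    have hpar : (-c)^(2*m-i) = (-1)^i * c^(2*m-i) := by
      rw [neg_pow]
      congr 1
      rcases Nat.even_or_odd i with he | ho
      · have : Even (2*m - i) := by
          rcases he with ⟨r, hr⟩; exact ⟨m - r, by omega⟩
        rw [this.neg_one_pow, he.neg_one_pow]
      · have : Odd (2*m - i) := by
          rcases ho with ⟨r, hr⟩; refine ⟨m - r - 1, by omega⟩
        rw [this.neg_one_pow, ho.neg_one_pow]
    rw [hpar]
    rcases Nat.even_or_odd i with he | ho
    · rw [if_pos he, he.neg_one_pow]; ring
    · rw [if_neg (by simpa [Nat.even_iff, Nat.odd_iff] using ho), ho.neg_one_pow]; ring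

/-- termwise coefficient inequality -/
lemma coeff_le (m j : ℕ) (hj : j ≤ m) :
    (Nat.choose (2*m) (2*j)) * (2*j).factorial ≤ (2*m).factorial * Nat.choose m j := by
  have h1 : Nat.choose (2*m) (2*j) * (2*j).factorial * (2*m - 2*j).factorial
      = (2*m).factorial := Nat.choose_mul_factorial_mul_factorial (by omega)
  have h2 : Nat.choose (2*m) (2*j) * (2*j).factorial ≤ (2*m).factorial := by
    calc Nat.choose (2*m) (2*j) * (2*j).factorial
        ≤ Nat.choose (2*m) (2*j) * (2*j).factorial * (2*m - 2*j).factorial :=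
          Nat.le_mul_of_pos_right _ (Nat.factorial_pos _)
      _ = (2*m).factorial := h1
  calc Nat.choose (2*m) (2*j) * (2*j).factorial ≤ (2*m).factorial := h2
    _ ≤ (2*m).factorial * Nat.choose m j :=
        Nat.le_mul_of_pos_right _ (Nat.choose_pos hj)




lemma moment : ∀ (n : ℕ) (a : Fin n → ℝ) (m : ℕ),
    ∑ ε : Fin n → Bool, (∑ k, a k * sgn (ε k))^(2*m)
      ≤ 2^n * (2*m).factorial * (∑ k, (a k)^2)^m := by
  intro n
  induction n with
  | zero =>
    intro a m
    rcases Nat.eq_zero_or_pos m with rfl | hm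
    · simp
    · have h2m : (2*m) ≠ 0 := by omega
      rw [Finset.sum_congr rfl (fun ε _ => by
        rw [show (∑ k : Fin 0, a k * sgn (ε k)) = 0 from by simp, zero_pow h2m])]
      simp only [Finset.sum_const]
      have : 0 ≤ 2^(0:ℕ) * ((2*m).factorial : ℝ) * (∑ k : Fin 0, (a k)^2)^m := by
        positivity
      simpa using this
  | succ n ih =>
    intro a m
    set Y : (Fin n → Bool) → ℝ := fun ε' => ∑ k, a (Fin.succ k) * sgn (ε' k) with hY
    set T : ℝ := ∑ k : Fin n, (a (Fin.succ k))^2 with hT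
    set c : ℝ := a 0 with hc
    have reidx : ∑ ε : Fin (n+1) → Bool, (∑ k, a k * sgn (ε k))^(2*m)
        = ∑ ε' : Fin n → Bool, ((Y ε' - c)^(2*m) + (Y ε' + c)^(2*m)) := by
      rw [← Equiv.sum_comp (Fin.consEquiv (fun _ => Bool))
        (fun ε => (∑ k, a k * sgn (ε k))^(2*m)), Fintype.sum_prod_type,
        Fintype.sum_bool, ← Finset.sum_add_distrib]
      refine Finset.sum_congr rfl fun ε' _ => ?_
      have h1 : ∀ b : Bool, (∑ k : Fin (n+1), a k * sgn ((Fin.consEquiv (fun _ => Bool)) (b, ε') k))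
          = a 0 * sgn b + Y ε' := by
        intro b
        rw [Fin.sum_univ_succ]
        simp [Fin.consEquiv]
        rfl
      rw [h1 true, h1 false]
      have e1 : sgn true = -1 := rfl
      have e2 : sgn false = 1 := rfl
      rw [e1, e2]
      ring
    rw [reidx]
    have expand : ∀ ε' : Fin n → Bool, (Y ε' - c)^(2*m) + (Y ε' + c)^(2*m)
        = ∑ j ∈ range (m+1), 2 * (Nat.choose (2*m) (2*j) : ℝ) * (Y ε')^(2*j) * c^(2*m-2*j) := by
      intro ε'; rw [add_comm ((Y ε' - c)^(2*m)), pow_even_add]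
    rw [Finset.sum_congr rfl (fun ε' _ => expand ε'), Finset.sum_comm]
    have hstep : ∀ j ∈ range (m+1),
        ∑ ε' : Fin n → Bool, 2 * (Nat.choose (2*m) (2*j) : ℝ) * (Y ε')^(2*j) * c^(2*m-2*j)
          ≤ 2^(n+1) * (2*m).factorial * ((Nat.choose m j : ℝ) * T^j * (c^2)^(m-j)) := by
      intro j hj
      have hjm : j ≤ m := by simp only [mem_range] at hj; omega
      have hceven : c^(2*m-2*j) = (c^2)^(m-j) := by
        rw [← pow_mul]; congr 1; omega
      have hYb : ∑ ε' : Fin n → Bool, (Y ε')^(2*j) ≤ 2^n * (2*j).factorial * T^j :=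
        ih (fun k => a (Fin.succ k)) j
      have hTnn : (0:ℝ) ≤ T := by
        rw [hT]; positivity
      have hYnn : (0:ℝ) ≤ ∑ ε' : Fin n → Bool, (Y ε')^(2*j) := by
        refine Finset.sum_nonneg fun ε' _ => ?_
        have : Even (2*j) := ⟨j, by ring⟩
        exact this.pow_nonneg _
      calc ∑ ε' : Fin n → Bool, 2 * (Nat.choose (2*m) (2*j) : ℝ) * (Y ε')^(2*j) * c^(2*m-2*j)
          = 2 * (Nat.choose (2*m) (2*j) : ℝ) * c^(2*m-2*j) * ∑ ε' : Fin n → Bool, (Y ε')^(2*j) := by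
            rw [Finset.mul_sum]
            exact Finset.sum_congr rfl fun ε' _ => by ring
        _ ≤ 2 * (Nat.choose (2*m) (2*j) : ℝ) * c^(2*m-2*j) * (2^n * (2*j).factorial * T^j) := by
            refine mul_le_mul_of_nonneg_left hYb ?_
            have : (0:ℝ) ≤ c^(2*m-2*j) := by
              rw [hceven]; positivity
            positivity
        _ = (2^(n+1) : ℝ) * ((Nat.choose (2*m) (2*j) : ℝ) * (2*j).factorial) * (T^j * (c^2)^(m-j)) := by
            rw [hceven]; ring
        _ ≤ (2^(n+1) : ℝ) * ((2*m).factorial * (Nat.choose m j : ℝ)) * (T^j * (c^2)^(m-j)) := by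
            refine mul_le_mul_of_nonneg_right (mul_le_mul_of_nonneg_left ?_ (by positivity)) (by positivity)
            exact_mod_cast coeff_le m j hjm
        _ = 2^(n+1) * (2*m).factorial * ((Nat.choose m j : ℝ) * T^j * (c^2)^(m-j)) := by ring
    calc ∑ j ∈ range (m+1), ∑ ε' : Fin n → Bool,
            2 * (Nat.choose (2*m) (2*j) : ℝ) * (Y ε')^(2*j) * c^(2*m-2*j)
        ≤ ∑ j ∈ range (m+1), 2^(n+1) * (2*m).factorial * ((Nat.choose m j : ℝ) * T^j * (c^2)^(m-j)) :=
          Finset.sum_le_sum hstep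
      _ = 2^(n+1) * (2*m).factorial * (∑ k : Fin (n+1), (a k)^2)^m := by
          rw [← Finset.mul_sum]
          congr 1
          rw [Fin.sum_univ_succ]
          rw [add_comm ((a 0)^2), add_pow]
          refine (Finset.sum_congr rfl fun j hj => ?_).symm
          ring




lemma rad_meas (n : ℕ) : Measurable (Rademacher n) := by
  unfold Rademacher
  refine Measurable.ite ?_ measurable_const measurable_const
  exact measurableSet_lt (measurable_fract.comp (measurable_const_mul _)) measurable_const

lemma rad_pm (n : ℕ) (t : ℝ) : Rademacher n t = 1 ∨ Rademacher n t = -1 := by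
  unfold Rademacher; split <;> simp

lemma rad_period (n : ℕ) (t : ℝ) : Rademacher n (t + 1) = Rademacher n t := by
  unfold Rademacher
  congr 1
  have : (2:ℝ)^n * (t+1) = 2^n * t + ((2^n : ℤ) : ℝ) := by push_cast; ring
  rw [this, Int.fract_add_intCast]

lemma rad_scale (n : ℕ) (t : ℝ) : Rademacher (n+1) t = Rademacher n (2*t) := by
  unfold Rademacher
  congr 2
  ring

lemma comp_meas {n : ℕ} (F : (Fin n → ℝ) → ℝ) (hF : Measurable F) (ind : Fin n → ℕ) :
    Measurable (fun t => F (fun k => Rademacher (ind k) t)) :=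
  hF.comp (measurable_pi_lambda _ fun k => rad_meas (ind k))

lemma comp_integrable {n : ℕ} (F : (Fin n → ℝ) → ℝ) (hF : Measurable F) (ind : Fin n → ℕ)
    (a b : ℝ) :
    IntervalIntegrable (fun t => F (fun k => Rademacher (ind k) t)) volume a b := by
  set M : ℝ := Finset.univ.sup' Finset.univ_nonempty
      (fun ε : Fin n → Bool => ‖F (fun k => sgn (ε k))‖) with hM
  have hbound : ∀ t : ℝ, ‖F (fun k => Rademacher (ind k) t)‖ ≤ M := by
    intro t
    have heq : (fun k => Rademacher (ind k) t)
        = (fun k => sgn (decide (Rademacher (ind k) t < 0))) := by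
      funext k
      rcases rad_pm (ind k) t with h | h <;> rw [h] <;> norm_num [sgn]
    rw [heq]
    exact Finset.le_sup' (fun ε : Fin n → Bool => ‖F (fun k => sgn (ε k))‖)
      (Finset.mem_univ (fun k => decide (Rademacher (ind k) t < 0)))
  rw [intervalIntegrable_iff]
  have hconst : IntegrableOn (fun _ : ℝ => M) (Set.uIoc a b) volume := by
    refine integrableOn_const ?_
    rw [Set.uIoc]
    exact measure_Ioc_lt_top.ne
  refine Integrable.mono' hconst ((comp_meas F hF ind).aestronglyMeasurable.restrict) ?_
  exact Filter.Eventually.of_forall (fun t => hbound t)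

lemma measurable_cons {n : ℕ} (c : ℝ) :
    Measurable (fun v : Fin n → ℝ => (Fin.cons c v : Fin (n+1) → ℝ)) := by
  refine measurable_pi_lambda _ fun i => ?_
  refine Fin.cases ?_ ?_ i
  · simpa using measurable_const
  · intro j
    simpa using measurable_pi_apply j

lemma ae_ne (c : ℝ) : ∀ᵐ t : ℝ, t ≠ c := by
  refine MeasureTheory.ae_iff.mpr ?_
  have : {a : ℝ | ¬ a ≠ c} = {c} := by ext x; simp
  rw [this]
  exact measure_singleton c

lemma integral_G : ∀ (n : ℕ) (F : (Fin n → ℝ) → ℝ), Measurable F →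
    ∫ t in (0:ℝ)..1, F (fun k => Rademacher k t)
      = ((2:ℝ)^n)⁻¹ * ∑ ε : Fin n → Bool, F (fun k => sgn (ε k)) := by
  intro n
  induction n with
  | zero =>
    intro F hF
    have h1 : ∀ t : ℝ, F (fun k => Rademacher k t) = F (fun k => sgn (k.elim0)) := by
      intro t; congr 1; funext k; exact k.elim0
    rw [intervalIntegral.integral_congr (fun t _ => h1 t)]
    rw [intervalIntegral.integral_const]
    haveI : Subsingleton (Fin 0 → Bool) := ⟨fun a b => funext fun k => k.elim0⟩
    have h2 : ∑ ε : Fin 0 → Bool, F (fun k => sgn (ε k)) = F (fun k => sgn (k.elim0)) := by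
      rw [Fintype.sum_subsingleton _ (fun k : Fin 0 => (k.elim0 : Bool))]
    rw [h2]; simp
  | succ n ih =>
    intro F hF
    -- pointwise rewrite to cons form
    have hpt : ∀ t : ℝ, F (fun k : Fin (n+1) => Rademacher k t)
        = F (Fin.cons (Rademacher 0 t) (fun k : Fin n => Rademacher k (2*t))) := by
      intro t
      congr 1
      funext k
      refine Fin.cases ?_ ?_ k
      · simp
      · intro j
        rw [Fin.cons_succ]
        exact rad_scale j t
    -- the two halves as functions
    set G1 : (Fin n → ℝ) → ℝ := fun v => F (Fin.cons 1 v) with hG1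
    set G2 : (Fin n → ℝ) → ℝ := fun v => F (Fin.cons (-1) v) with hG2
    have hG1m : Measurable G1 := hF.comp (measurable_cons 1)
    have hG2m : Measurable G2 := hF.comp (measurable_cons (-1))
    have hsplit : ∫ t in (0:ℝ)..1, F (fun k : Fin (n+1) => Rademacher k t)
        = (∫ t in (0:ℝ)..(1/2), F (fun k : Fin (n+1) => Rademacher k t))
          + ∫ t in (1/2:ℝ)..1, F (fun k : Fin (n+1) => Rademacher k t) :=
      (intervalIntegral.integral_add_adjacent_intervals
        (comp_integrable F hF (fun k => (k : ℕ)) 0 (1/2))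
        (comp_integrable F hF (fun k => (k : ℕ)) (1/2) 1)).symm
    have hfirst : ∫ t in (0:ℝ)..(1/2), F (fun k : Fin (n+1) => Rademacher k t)
        = ∫ t in (0:ℝ)..(1/2), G1 (fun k : Fin n => Rademacher k (2*t)) := by
      refine intervalIntegral.integral_congr_ae ?_
      filter_upwards [ae_ne (1/2 : ℝ)] with t ht htm
      rw [Set.uIoc_of_le (by norm_num : (0:ℝ) ≤ 1/2)] at htm
      rw [hpt t, hG1]
      have hfr : Rademacher 0 t = 1 := by
        unfold Rademacher
        rw [if_pos]
        rw [pow_zero, one_mul, Int.fract_eq_self.mpr ⟨le_of_lt htm.1, by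
          rcases lt_or_eq_of_le htm.2 with h | h
          · linarith
          · exact absurd h ht⟩]
        rcases lt_or_eq_of_le htm.2 with h | h
        · exact h
        · exact absurd h ht
      rw [hfr]
    have hsecond : ∫ t in (1/2:ℝ)..1, F (fun k : Fin (n+1) => Rademacher k t)
        = ∫ t in (1/2:ℝ)..1, G2 (fun k : Fin n => Rademacher k (2*t)) := by
      refine intervalIntegral.integral_congr_ae ?_
      filter_upwards [ae_ne (1 : ℝ)] with t ht htm
      rw [Set.uIoc_of_le (by norm_num : (1/2:ℝ) ≤ 1)] at htm
      rw [hpt t, hG2]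
      have ht1 : t < 1 := lt_of_le_of_ne htm.2 ht
      have hfr : Rademacher 0 t = -1 := by
        unfold Rademacher
        rw [if_neg]
        rw [pow_zero, one_mul, Int.fract_eq_self.mpr ⟨by linarith [htm.1], ht1⟩]
        push_neg
        linarith [htm.1]
      rw [hfr]
    -- scaling substitutions
    have hsub1 : ∫ t in (0:ℝ)..(1/2), G1 (fun k : Fin n => Rademacher k (2*t))
        = (2:ℝ)⁻¹ * ∫ s in (0:ℝ)..1, G1 (fun k : Fin n => Rademacher k s) := by
      have := intervalIntegral.integral_comp_mul_left
        (f := fun s => G1 (fun k : Fin n => Rademacher k s)) (a := (0:ℝ)) (b := 1/2)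
        (c := (2:ℝ)) (by norm_num)
      rw [this]
      norm_num
    have hsub2 : ∫ t in (1/2:ℝ)..1, G2 (fun k : Fin n => Rademacher k (2*t))
        = (2:ℝ)⁻¹ * ∫ s in (0:ℝ)..1, G2 (fun k : Fin n => Rademacher k s) := by
      have h3 : ∀ s : ℝ, G2 (fun k : Fin n => Rademacher k (s + 1))
          = G2 (fun k : Fin n => Rademacher k s) := by
        intro s; congr 1; funext k; exact rad_period k s
      have h4 : ∫ s in (1:ℝ)..2, G2 (fun k : Fin n => Rademacher k s)
          = ∫ s in (0:ℝ)..1, G2 (fun k : Fin n => Rademacher k s) := by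
        have h2 := intervalIntegral.integral_comp_add_right
          (f := fun s => G2 (fun k : Fin n => Rademacher k s)) (a := (0:ℝ)) (b := 1) 1
        norm_num at h2
        rw [← h2]
        exact intervalIntegral.integral_congr (fun s _ => h3 s)
      have h1 := intervalIntegral.integral_comp_mul_left
        (f := fun s => G2 (fun k : Fin n => Rademacher k s)) (a := (1/2:ℝ)) (b := 1)
        (c := (2:ℝ)) (by norm_num)
      norm_num at h1
      rw [h1, h4]
      norm_num
    rw [hsplit, hfirst, hsecond, hsub1, hsub2, ih G1 hG1m, ih G2 hG2m]
    -- combinatorial side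
    have hsum : ∑ ε : Fin (n+1) → Bool, F (fun k => sgn (ε k))
        = (∑ ε' : Fin n → Bool, G1 (fun k => sgn (ε' k)))
          + ∑ ε' : Fin n → Bool, G2 (fun k => sgn (ε' k)) := by
      rw [← Equiv.sum_comp (Fin.consEquiv (fun _ => Bool))
        (fun ε : Fin (n+1) → Bool => F (fun k => sgn (ε k))), Fintype.sum_prod_type,
        Fintype.sum_bool]
      rw [add_comm]
      congr 1
      · refine Finset.sum_congr rfl fun ε' _ => ?_
        rw [hG1]
        congr 1
        funext k
        refine Fin.cases ?_ ?_ k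
        · simp [Fin.consEquiv, sgn]
        · intro j; simp [Fin.consEquiv]
      · refine Finset.sum_congr rfl fun ε' _ => ?_
        rw [hG2]
        congr 1
        funext k
        refine Fin.cases ?_ ?_ k
        · simp [Fin.consEquiv, sgn]
        · intro j; simp [Fin.consEquiv]
    rw [hsum]
    rw [pow_succ]
    ring

lemma integral_shift (n : ℕ) (F : (Fin n → ℝ) → ℝ) (hF : Measurable F) :
    ∫ t in (0:ℝ)..1, F (fun k : Fin n => Rademacher (k.1+1) t)
      = ((2:ℝ)^n)⁻¹ * ∑ ε : Fin n → Bool, F (fun k => sgn (ε k)) := by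
  have hpt : ∀ t : ℝ, F (fun k : Fin n => Rademacher (k.1+1) t)
      = F (fun k : Fin n => Rademacher k (2*t)) := by
    intro t; congr 1; funext k; exact rad_scale k t
  rw [intervalIntegral.integral_congr (fun t _ => hpt t)]
  have h1 := intervalIntegral.integral_comp_mul_left
    (f := fun s => F (fun k : Fin n => Rademacher k s)) (a := (0:ℝ)) (b := 1)
    (c := (2:ℝ)) (by norm_num)
  rw [h1]
  have hsplit : ∫ s in (0:ℝ)..2, F (fun k : Fin n => Rademacher k s)
      = (∫ s in (0:ℝ)..1, F (fun k : Fin n => Rademacher k s))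
        + ∫ s in (1:ℝ)..2, F (fun k : Fin n => Rademacher k s) :=
    (intervalIntegral.integral_add_adjacent_intervals
      (comp_integrable F hF (fun k => (k : ℕ)) 0 1)
      (comp_integrable F hF (fun k => (k : ℕ)) 1 2)).symm
  have h3 : ∀ s : ℝ, F (fun k : Fin n => Rademacher k (s + 1))
      = F (fun k : Fin n => Rademacher k s) := by
    intro s; congr 1; funext k; exact rad_period k s
  have h4 : ∫ s in (1:ℝ)..2, F (fun k : Fin n => Rademacher k s)
      = ∫ s in (0:ℝ)..1, F (fun k : Fin n => Rademacher k s) := by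
    have h2 := intervalIntegral.integral_comp_add_right
      (f := fun s => F (fun k : Fin n => Rademacher k s)) (a := (0:ℝ)) (b := 1) 1
    norm_num at h2
    rw [← h2]
    exact intervalIntegral.integral_congr (fun s _ => h3 s)
  rw [show (2:ℝ) * 0 = 0 by norm_num, show (2:ℝ) * 1 = 2 by norm_num, hsplit, h4,
    integral_G n F hF]
  simp only [smul_eq_mul]
  ring




/-- complex second moment -/
lemma csq {n : ℕ} (lam : Fin n → ℂ) :
    ∑ ε : Fin n → Bool, ‖∑ k, lam k * (sgn (ε k) : ℂ)‖ ^ 2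
      = 2^n * ∑ k, ‖lam k‖ ^ 2 := by
  have hre : ∀ ε : Fin n → Bool, (∑ k, lam k * (sgn (ε k) : ℂ)).re
      = ∑ k, (lam k).re * sgn (ε k) := by
    intro ε
    rw [Complex.re_sum]
    refine Finset.sum_congr rfl fun k _ => ?_
    simp [Complex.mul_re]
  have him : ∀ ε : Fin n → Bool, (∑ k, lam k * (sgn (ε k) : ℂ)).im
      = ∑ k, (lam k).im * sgn (ε k) := by
    intro ε
    rw [Complex.im_sum]
    refine Finset.sum_congr rfl fun k _ => ?_
    simp [Complex.mul_im]
  have habs : ∀ ε : Fin n → Bool, ‖∑ k, lam k * (sgn (ε k) : ℂ)‖ ^ 2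
      = (∑ k, (lam k).re * sgn (ε k))^2 + (∑ k, (lam k).im * sgn (ε k))^2 := by
    intro ε
    rw [Complex.sq_norm, Complex.normSq_apply, hre, him]
    ring
  rw [Finset.sum_congr rfl (fun ε _ => habs ε), Finset.sum_add_distrib,
    sum_sq (fun k => (lam k).re), sum_sq (fun k => (lam k).im), ← mul_add, ← Finset.sum_add_distrib]
  congr 1
  refine Finset.sum_congr rfl fun k _ => ?_
  rw [Complex.sq_norm, Complex.normSq_apply]
  ring

lemma add_pow_le' {x y : ℝ} (hx : 0 ≤ x) (hy : 0 ≤ y) (m : ℕ) :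
    (x + y)^m ≤ 2^m * (x^m + y^m) := by
  rcases le_total x y with h | h
  · calc (x+y)^m ≤ (2*y)^m := pow_le_pow_left₀ (by linarith) (by linarith) m
      _ = 2^m * y^m := mul_pow 2 y m
      _ ≤ 2^m * (x^m + y^m) := by
          have : (0:ℝ) ≤ x^m := pow_nonneg hx m
          have h2 : (0:ℝ) ≤ (2:ℝ)^m := by positivity
          nlinarith
  · calc (x+y)^m ≤ (2*x)^m := pow_le_pow_left₀ (by linarith) (by linarith) m
      _ = 2^m * x^m := mul_pow 2 x m
      _ ≤ 2^m * (x^m + y^m) := by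
          have : (0:ℝ) ≤ y^m := pow_nonneg hy m
          have h2 : (0:ℝ) ≤ (2:ℝ)^m := by positivity
          nlinarith

/-- complex even moments -/
lemma cmoment (n : ℕ) (lam : Fin n → ℂ) (m : ℕ) :
    ∑ ε : Fin n → Bool, ‖∑ k, lam k * (sgn (ε k) : ℂ)‖ ^ (2*m)
      ≤ 2^n * (2^(m+1) * (2*m).factorial) * (∑ k, ‖lam k‖ ^ 2)^m := by
  set A : (Fin n → Bool) → ℝ := fun ε => ∑ k, (lam k).re * sgn (ε k) with hA
  set B : (Fin n → Bool) → ℝ := fun ε => ∑ k, (lam k).im * sgn (ε k) with hB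
  set Sre : ℝ := ∑ k, ((lam k).re)^2 with hSre
  set Sim : ℝ := ∑ k, ((lam k).im)^2 with hSim
  set S : ℝ := ∑ k, ‖lam k‖ ^ 2 with hS
  have hSsplit : S = Sre + Sim := by
    rw [hS, hSre, hSim, ← Finset.sum_add_distrib]
    refine Finset.sum_congr rfl fun k _ => ?_
    rw [Complex.sq_norm, Complex.normSq_apply]; ring
  have hSre_nn : 0 ≤ Sre := by rw [hSre]; positivity
  have hSim_nn : 0 ≤ Sim := by rw [hSim]; positivity
  have habs : ∀ ε : Fin n → Bool, ‖∑ k, lam k * (sgn (ε k) : ℂ)‖ ^ (2*m)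
      = ((A ε)^2 + (B ε)^2)^m := by
    intro ε
    rw [pow_mul, Complex.sq_norm, Complex.normSq_apply, Complex.re_sum, Complex.im_sum]
    have hre : ∑ k, (lam k * (sgn (ε k):ℂ)).re = A ε := by
      rw [hA]; exact Finset.sum_congr rfl fun k _ => by simp [Complex.mul_re]
    have him : ∑ k, (lam k * (sgn (ε k):ℂ)).im = B ε := by
      rw [hB]; exact Finset.sum_congr rfl fun k _ => by simp [Complex.mul_im]
    rw [hre, him]
    congr 1
    ring
  calc ∑ ε : Fin n → Bool, ‖∑ k, lam k * (sgn (ε k) : ℂ)‖ ^ (2*m)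
      = ∑ ε : Fin n → Bool, ((A ε)^2 + (B ε)^2)^m :=
        Finset.sum_congr rfl fun ε _ => habs ε
    _ ≤ ∑ ε : Fin n → Bool, 2^m * (((A ε)^2)^m + ((B ε)^2)^m) :=
        Finset.sum_le_sum fun ε _ => add_pow_le' (sq_nonneg _) (sq_nonneg _) m
    _ = 2^m * ((∑ ε : Fin n → Bool, (A ε)^(2*m)) + ∑ ε : Fin n → Bool, (B ε)^(2*m)) := by
        rw [← Finset.mul_sum, Finset.sum_add_distrib]
        congr 2 <;> exact Finset.sum_congr rfl fun ε _ => by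
          rw [← pow_mul, show 2*m = m*2 from by ring]
    _ ≤ 2^m * ((2^n * (2*m).factorial * Sre^m) + (2^n * (2*m).factorial * Sim^m)) := by
        have h1 := moment n (fun k => (lam k).re) m
        have h2 := moment n (fun k => (lam k).im) m
        have h2m : (0:ℝ) ≤ 2^m := by positivity
        exact mul_le_mul_of_nonneg_left (add_le_add h1 h2) h2m
    _ ≤ 2^m * ((2^n * (2*m).factorial * S^m) + (2^n * (2*m).factorial * S^m)) := by
        have hf : (0:ℝ) ≤ 2^n * (2*m).factorial := by positivity
        have e1 : Sre^m ≤ S^m := pow_le_pow_left₀ hSre_nn (by rw [hSsplit]; linarith) m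
        have e2 : Sim^m ≤ S^m := pow_le_pow_left₀ hSim_nn (by rw [hSsplit]; linarith) m
        have h2m : (0:ℝ) ≤ 2^m := by positivity
        refine mul_le_mul_of_nonneg_left (add_le_add ?_ ?_) h2m
        · exact mul_le_mul_of_nonneg_left e1 hf
        · exact mul_le_mul_of_nonneg_left e2 hf
    _ = 2^n * (2^(m+1) * (2*m).factorial) * S^m := by ring

/-- Jensen / power mean inequality for uniform averages -/
lemma jensen {ι : Type*} [Fintype ι] [Nonempty ι] (y : ι → ℝ) (hy : ∀ i, 0 ≤ y i)
    {p q : ℝ} (hp : 0 < p) (hpq : p ≤ q) :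
    (Fintype.card ι : ℝ)⁻¹ * ∑ i, y i ^ p
      ≤ ((Fintype.card ι : ℝ)⁻¹ * ∑ i, y i ^ q) ^ (p/q) := by
  have hq : 0 < q := lt_of_lt_of_le hp hpq
  have hcard : (0:ℝ) < (Fintype.card ι : ℝ) := by
    have := Fintype.card_pos (α := ι)
    exact_mod_cast this
  set w : ι → ℝ := fun _ => (Fintype.card ι : ℝ)⁻¹ with hw
  have hw0 : ∀ i ∈ univ, (0:ℝ) ≤ w i := fun i _ => by rw [hw]; positivity
  have hw1 : ∑ i : ι, w i = 1 := by
    rw [hw]; rw [Finset.sum_const, Finset.card_univ, nsmul_eq_mul]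
    field_simp
  have hz : ∀ i ∈ univ, (0:ℝ) ≤ y i ^ p := fun i _ => Real.rpow_nonneg (hy i) p
  have key := Real.rpow_arith_mean_le_arith_mean_rpow univ w (fun i => y i ^ p) hw0 hw1 hz
    (le_div_iff₀ hp |>.mpr (by linarith) : 1 ≤ q/p)
  have hyq : ∀ i : ι, (y i ^ p) ^ (q/p) = y i ^ q := by
    intro i
    rw [← Real.rpow_mul (hy i)]
    congr 1
    field_simp
  have hkey2 : (∑ i, w i * y i ^ p) ^ (q/p) ≤ ∑ i, w i * y i ^ q :=
    key.trans_eq (Finset.sum_congr rfl fun i _ => by rw [hyq i])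
  have hwsum : ∀ z : ι → ℝ, ∑ i, w i * z i = (Fintype.card ι : ℝ)⁻¹ * ∑ i, z i := fun z => by
    rw [hw, ← Finset.mul_sum]
  have hA0 : 0 ≤ ∑ i, w i * y i ^ p :=
    Finset.sum_nonneg fun i hi => mul_nonneg (hw0 i hi) (hz i hi)
  calc (Fintype.card ι : ℝ)⁻¹ * ∑ i, y i ^ p
      = ∑ i, w i * y i ^ p := (hwsum _).symm
    _ = ((∑ i, w i * y i ^ p) ^ (q/p)) ^ (p/q) := by
        rw [← Real.rpow_mul hA0, show q/p*(p/q) = 1 from by field_simp, Real.rpow_one]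
    _ ≤ (∑ i, w i * y i ^ q) ^ (p/q) :=
        Real.rpow_le_rpow (Real.rpow_nonneg hA0 _) hkey2 (by positivity)
    _ = ((Fintype.card ι : ℝ)⁻¹ * ∑ i, y i ^ q) ^ (p/q) := by rw [hwsum]


noncomputable def Kc (q : ℝ) : ℝ :=
  ((2:ℝ)^(⌈q/2⌉₊+1) * ((2*⌈q/2⌉₊).factorial : ℝ)) ^ (q/(2*(⌈q/2⌉₊:ℝ)))

lemma Kc_pos (q : ℝ) : 0 < Kc q :=
  Real.rpow_pos_of_pos (by positivity) _

lemma rpow_two' (x : ℝ) : x ^ ((2:ℝ)) = x^(2:ℕ) := by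
  rw [show (2:ℝ) = ((2:ℕ):ℝ) from by norm_num, Real.rpow_natCast]

lemma card_fun_real (n : ℕ) : ((Fintype.card (Fin n → Bool)) : ℝ) = (2:ℝ)^n := by
  rw [Fintype.card_fun]
  push_cast
  simp

lemma disc_upper (q : ℝ) (hq : 0 < q) (n : ℕ) (lam : Fin n → ℂ) :
    ((2:ℝ)^n)⁻¹ * ∑ ε : Fin n → Bool, ‖∑ k, lam k * (sgn (ε k) : ℂ)‖ ^ q
      ≤ Kc q * (∑ k, ‖lam k‖ ^ 2) ^ (q/2) := by
  set m := ⌈q/2⌉₊ with hm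
  have hm0 : 0 < m := Nat.ceil_pos.mpr (by positivity)
  have hmR : (0:ℝ) < (m:ℝ) := by exact_mod_cast hm0
  have hq2m : q ≤ 2*(m:ℝ) := by
    have h := Nat.le_ceil (q/2)
    rw [← hm] at h
    linarith
  set y : (Fin n → Bool) → ℝ := fun ε => ‖∑ k, lam k * (sgn (ε k):ℂ)‖ with hy0
  have hy : ∀ ε, 0 ≤ y ε := fun ε => norm_nonneg _
  set S : ℝ := ∑ k, ‖lam k‖ ^ 2 with hS
  have hSnn : 0 ≤ S := by
    rw [hS]; positivity
  have hJ := jensen y hy hq hq2m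
  rw [card_fun_real] at hJ
  have hmom : ((2:ℝ)^n)⁻¹ * ∑ ε, y ε ^ (2*(m:ℝ)) ≤ 2^(m+1) * ((2*m).factorial : ℝ) * S^m := by
    have hcast : ∀ ε, y ε ^ (2*(m:ℝ)) = y ε ^ (2*m : ℕ) := by
      intro ε
      rw [show (2*(m:ℝ)) = ((2*m : ℕ):ℝ) from by push_cast; ring, Real.rpow_natCast]
    rw [Finset.sum_congr rfl (fun ε _ => hcast ε)]
    have hcm := cmoment n lam m
    rw [← hS] at hcm
    have h2n : (0:ℝ) < 2^n := by positivity
    calc ((2:ℝ)^n)⁻¹ * ∑ ε, y ε ^ (2*m : ℕ)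
        ≤ ((2:ℝ)^n)⁻¹ * (2^n * (2^(m+1) * ((2*m).factorial : ℝ)) * S^m) :=
          mul_le_mul_of_nonneg_left hcm (by positivity)
      _ = 2^(m+1) * ((2*m).factorial : ℝ) * S^m := by field_simp
  calc ((2:ℝ)^n)⁻¹ * ∑ ε, y ε ^ q
      ≤ (((2:ℝ)^n)⁻¹ * ∑ ε, y ε ^ (2*(m:ℝ))) ^ (q/(2*(m:ℝ))) := hJ
    _ ≤ (2^(m+1) * ((2*m).factorial : ℝ) * S^m) ^ (q/(2*(m:ℝ))) := by
        refine Real.rpow_le_rpow ?_ hmom (by positivity)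
        have : ∀ ε ∈ (univ : Finset (Fin n → Bool)), (0:ℝ) ≤ y ε ^ (2*(m:ℝ)) :=
          fun ε _ => Real.rpow_nonneg (hy ε) _
        have hsum := Finset.sum_nonneg this
        positivity
    _ = Kc q * S ^ (q/2) := by
        rw [Real.mul_rpow (by positivity) (by positivity), Kc]
        congr 1
        rw [← Real.rpow_natCast S m, ← Real.rpow_mul hSnn]
        congr 1
        field_simp

lemma disc_lower (p : ℝ) (hp : 0 < p) (n : ℕ) (lam : Fin n → ℂ) :
    (∑ k, ‖lam k‖ ^ 2) ^ (p/2)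
      ≤ (Kc (4-p) + 1) *
        (((2:ℝ)^n)⁻¹ * ∑ ε : Fin n → Bool, ‖∑ k, lam k * (sgn (ε k) : ℂ)‖ ^ p) := by
  set y : (Fin n → Bool) → ℝ := fun ε => ‖∑ k, lam k * (sgn (ε k):ℂ)‖ with hy0
  have hy : ∀ ε, 0 ≤ y ε := fun ε => norm_nonneg _
  set S : ℝ := ∑ k, ‖lam k‖ ^ 2 with hS
  have hSnn : 0 ≤ S := by rw [hS]; positivity
  have h2n : (0:ℝ) < 2^n := by positivity
  set E : ℝ := ((2:ℝ)^n)⁻¹ * ∑ ε, y ε ^ p with hE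
  have hEnn : 0 ≤ E := by
    rw [hE]
    have : ∀ ε ∈ (univ : Finset (Fin n → Bool)), (0:ℝ) ≤ y ε ^ p :=
      fun ε _ => Real.rpow_nonneg (hy ε) _
    have := Finset.sum_nonneg this
    positivity
  have hKpos := Kc_pos (4-p)
  have avg2 : ((2:ℝ)^n)⁻¹ * ∑ ε, y ε ^ (2:ℕ) = S := by
    rw [hy0, csq lam, ← hS]
    field_simp
  rcases le_or_gt 2 p with hp2 | hp2
  · -- p ≥ 2
    have hJ := jensen y hy (by norm_num : (0:ℝ) < 2) hp2
    rw [card_fun_real] at hJ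
    rw [Finset.sum_congr rfl (fun ε _ => rpow_two' (y ε)), avg2, ← hE] at hJ
    have hmain : S ^ (p/2) ≤ E := by
      calc S ^ (p/2) ≤ (E ^ (2/p)) ^ (p/2) :=
            Real.rpow_le_rpow hSnn hJ (by positivity)
        _ = E := by
            rw [← Real.rpow_mul hEnn, show 2/p*(p/2) = 1 from by field_simp, Real.rpow_one]
    calc S ^ (p/2) ≤ E := hmain
      _ ≤ (Kc (4-p) + 1) * E := by nlinarith
  · -- p < 2
    have hq : (0:ℝ) < 4 - p := by linarith
    set f : (Fin n → Bool) → ℝ := fun ε => y ε ^ (p/2) with hf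
    set g : (Fin n → Bool) → ℝ := fun ε => y ε ^ ((4-p)/2) with hg
    have hfg : ∀ ε, f ε * g ε = y ε ^ (2:ℕ) := by
      intro ε
      rw [hf, hg, ← Real.rpow_add' (hy ε) (by intro h; nlinarith : p/2 + (4-p)/2 ≠ 0),
        show p/2 + (4-p)/2 = 2 from by ring, rpow_two']
    have hf2 : ∀ ε, f ε ^ (2:ℕ) = y ε ^ p := by
      intro ε
      rw [hf, sq, ← Real.rpow_add' (hy ε) (by positivity : p/2 + p/2 ≠ 0)]
      congr 1; ring
    have hg2 : ∀ ε, g ε ^ (2:ℕ) = y ε ^ (4-p) := by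
      intro ε
      rw [hg, sq, ← Real.rpow_add' (hy ε) (by positivity : (4-p)/2 + (4-p)/2 ≠ 0)]
      congr 1; ring
    have hCS := Finset.sum_mul_sq_le_sq_mul_sq (univ : Finset (Fin n → Bool)) f g
    rw [Finset.sum_congr rfl (fun ε _ => hfg ε),
      Finset.sum_congr rfl (fun ε _ => hf2 ε),
      Finset.sum_congr rfl (fun ε _ => hg2 ε)] at hCS
    set Eq : ℝ := ((2:ℝ)^n)⁻¹ * ∑ ε, y ε ^ (4-p) with hEq
    have hCS' : S^(2:ℕ) ≤ E * Eq := by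
      calc S^(2:ℕ) = (((2:ℝ)^n)⁻¹ * ∑ ε, y ε ^ (2:ℕ))^(2:ℕ) := by rw [avg2]
        _ = (((2:ℝ)^n)⁻¹)^(2:ℕ) * (∑ ε, y ε ^ (2:ℕ))^(2:ℕ) := by ring
        _ ≤ (((2:ℝ)^n)⁻¹)^(2:ℕ) * ((∑ ε, y ε ^ p) * ∑ ε, y ε ^ (4-p)) :=
            mul_le_mul_of_nonneg_left hCS (by positivity)
        _ = E * Eq := by rw [hE, hEq]; ring
    have hEqle : Eq ≤ Kc (4-p) * S ^ ((4-p)/2) := by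
      rw [hEq]
      exact disc_upper (4-p) hq n lam
    rcases eq_or_lt_of_le hSnn with hS0 | hSpos
    · rw [← hS0, Real.zero_rpow (by positivity : p/2 ≠ 0)]
      positivity
    · have hkey : S^(p/2) * S^((4-p)/2) = S^(2:ℕ) := by
        rw [← Real.rpow_add' hSnn (by intro h; nlinarith : p/2 + (4-p)/2 ≠ 0),
          show p/2 + (4-p)/2 = 2 from by ring, rpow_two']
      have hstep : S^(p/2) * S^((4-p)/2) ≤ (Kc (4-p) * E) * S^((4-p)/2) := by
        rw [hkey]
        calc S^(2:ℕ) ≤ E * Eq := hCS'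
          _ ≤ E * (Kc (4-p) * S ^ ((4-p)/2)) := mul_le_mul_of_nonneg_left hEqle hEnn
          _ = (Kc (4-p) * E) * S^((4-p)/2) := by ring
      have := le_of_mul_le_mul_right hstep (Real.rpow_pos_of_pos hSpos ((4-p)/2))
      nlinarith

end Khinchine

open Khinchine in
/-- Khinchine's inequality: for `0 < p < ∞` there is `C_p > 0` with
`C_p⁻¹ (∑ |λ_k|²)^{p/2} ≤ ∫₀¹ |∑ λ_k R_k(t)|^p dt ≤ C_p (∑ |λ_k|²)^{p/2}`. -/
theorem stmt2 (p : ℝ) (hp : 0 < p) :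
    ∃ C : ℝ, 0 < C ∧ ∀ (n : ℕ) (lam : Fin n → ℂ),
      C⁻¹ * (∑ k, ‖lam k‖ ^ 2) ^ (p / 2) ≤
        (∫ t in (0:ℝ)..1, ‖∑ k, lam k * (Rademacher (k.1 + 1) t : ℂ)‖ ^ p) ∧
      (∫ t in (0:ℝ)..1, ‖∑ k, lam k * (Rademacher (k.1 + 1) t : ℂ)‖ ^ p) ≤
        C * (∑ k, ‖lam k‖ ^ 2) ^ (p / 2) := by
  have hK1 := Kc_pos p
  have hK2 := Kc_pos (4-p)
  refine ⟨Kc p + (Kc (4-p) + 1), by linarith, fun n lam => ?_⟩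
  have hFm : Measurable (fun v : Fin n → ℝ => ‖∑ k, lam k * (v k : ℂ)‖ ^ p) := by
    have hc1 : Continuous (fun v : Fin n → ℝ => ∑ k, lam k * (v k : ℂ)) :=
      continuous_finset_sum _ fun k _ =>
        continuous_const.mul (Complex.continuous_ofReal.comp (continuous_apply k))
    have hcont : Continuous (fun v : Fin n → ℝ => ‖∑ k, lam k * (v k : ℂ)‖) :=
      continuous_norm.comp hc1
    exact (hcont.rpow_const (fun v => Or.inr hp.le)).measurable
  have key : (∫ t in (0:ℝ)..1, ‖∑ k, lam k * (Rademacher (k.1 + 1) t : ℂ)‖ ^ p)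
      = ((2:ℝ)^n)⁻¹ * ∑ ε : Fin n → Bool, ‖∑ k, lam k * (sgn (ε k) : ℂ)‖ ^ p :=
    integral_shift n (fun v : Fin n → ℝ => ‖∑ k, lam k * (v k : ℂ)‖ ^ p) hFm
  rw [key]
  have hSnn : (0:ℝ) ≤ ∑ k, ‖lam k‖ ^ 2 := by positivity
  have hEnn : (0:ℝ) ≤ ((2:ℝ)^n)⁻¹ * ∑ ε : Fin n → Bool,
      ‖∑ k, lam k * (sgn (ε k) : ℂ)‖ ^ p := by
    have : ∀ ε ∈ (Finset.univ : Finset (Fin n → Bool)),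
        (0:ℝ) ≤ ‖∑ k, lam k * (sgn (ε k) : ℂ)‖ ^ p :=
      fun ε _ => Real.rpow_nonneg (norm_nonneg _) _
    have := Finset.sum_nonneg this
    positivity
  constructor
  · have h := disc_lower p hp n lam
    rw [inv_mul_le_iff₀ (by linarith)]
    calc (∑ k, ‖lam k‖ ^ 2) ^ (p / 2)
        ≤ (Kc (4-p) + 1) * (((2:ℝ)^n)⁻¹ * ∑ ε : Fin n → Bool,
            ‖∑ k, lam k * (sgn (ε k) : ℂ)‖ ^ p) := h
      _ ≤ (Kc p + (Kc (4-p) + 1)) * (((2:ℝ)^n)⁻¹ * ∑ ε : Fin n → Bool,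
            ‖∑ k, lam k * (sgn (ε k) : ℂ)‖ ^ p) :=
          mul_le_mul_of_nonneg_right (by linarith) hEnn
  · have h := disc_upper p hp n lam
    calc ((2:ℝ)^n)⁻¹ * ∑ ε : Fin n → Bool,
          ‖∑ k, lam k * (sgn (ε k) : ℂ)‖ ^ p
        ≤ Kc p * (∑ k, ‖lam k‖ ^ 2) ^ (p/2) := h
      _ ≤ (Kc p + (Kc (4-p) + 1)) * (∑ k, ‖lam k‖ ^ 2) ^ (p/2) :=
          mul_le_mul_of_nonneg_right (by linarith)
            (Real.rpow_nonneg hSnn _)
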